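/- Let d ≥ 2 and κ ≥ 1 be coprime integers, let a ≥ 1 be an integer, let x_1 > x_2 > … > x_a ≥ 0 be integers, and set n = (Σ_{i=1}^{a} x_i) − a(a−1)/2 (a nonnegative integer). Then π_{κ/d}( ∏_{i=n+1}^{n+d}(q^i − 1) · ∏_{i=2}^{a}(q^{x_1+d} − q^{x_i}) ) − π_{κ/d}( ∏_{i=x_1+1}^{x_1+d}(q^i − 1) · ∏_{i=2}^{a}(q^{x_1} − q^{x_i}) ) = 2κ(n − x_1 + a − 1). -/

import Mathlib

open Polynomial

/-- `argCount t f` is the cardinality of the multiset `Arg_t(f)` of real numbers `λ` with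
`0 < λ ≤ 2πt` such that `e^{iλ}` is a (complex) root of the real polynomial `f`, each such `λ`
counted with the multiplicity of `e^{iλ}` as a root of `f`. -/
noncomputable def argCount (t : ℝ) (f : Polynomial ℝ) : ℕ :=
  ((f.map (algebraMap ℝ ℂ)).roots.map fun ξ =>
    Nat.card {l : ℝ // 0 < l ∧ l ≤ 2 * Real.pi * t ∧ Complex.exp ((l : ℂ) * Complex.I) = ξ}).sum

/-- `piFn κ d f` is the rational number
`π_{κ/d}(f) = (a(f) + A(f))·(κ/d) + |Arg_{κ/d}(f)| + (1/2)·(multiplicity of 1 as a root of f)`,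
where `a(f)` is the multiplicity of `0` as a root of `f` and `A(f)` is the degree of `f`. -/
noncomputable def piFn (κ d : ℕ) (f : Polynomial ℝ) : ℚ :=
  ((rootMultiplicity 0 f : ℚ) + (f.natDegree : ℚ)) * (κ : ℚ) / (d : ℚ)
    + (argCount ((κ : ℝ) / (d : ℝ)) f : ℚ) + (rootMultiplicity 1 f : ℚ) / 2

open Real Complex in
lemma card_S {t : ℝ} (ht : 0 ≤ t) {m : ℕ} (hm : 0 < m) :
    Nat.card {l : ℝ // 0 < l ∧ l ≤ 2 * Real.pi * t ∧
      Complex.exp ((l : ℂ) * Complex.I) ^ m = 1} = ⌊(m : ℝ) * t⌋₊ := by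
  have hm0 : (m : ℝ) ≠ 0 := Nat.cast_ne_zero.mpr hm.ne'
  have hm0c : (m : ℂ) ≠ 0 := Nat.cast_ne_zero.mpr hm.ne'
  have hπ := Real.pi_pos
  set f : {j : ℤ // 0 < j ∧ (j : ℝ) ≤ (m : ℝ) * t} →
      {l : ℝ // 0 < l ∧ l ≤ 2 * Real.pi * t ∧ Complex.exp ((l : ℂ) * Complex.I) ^ m = 1} :=
    fun j => ⟨2 * Real.pi * (j.1 : ℝ) / m, by
      have hj0 : 0 < j.1 := j.2.1
      have hjt : (j.1 : ℝ) ≤ (m : ℝ) * t := j.2.2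
      have hj0' : (0 : ℝ) < (j.1 : ℝ) := by exact_mod_cast hj0
      refine ⟨by positivity, ?_, ?_⟩
      · rw [div_le_iff₀ (by positivity)]
        nlinarith
      · rw [← Complex.exp_nat_mul]
        have heq : (m : ℂ) * (((2 * Real.pi * (j.1 : ℝ) / m : ℝ) : ℂ) * Complex.I)
            = (j.1 : ℂ) * (2 * (Real.pi : ℂ) * Complex.I) := by
          push_cast
          field_simp
        rw [heq, Complex.exp_int_mul_two_pi_mul_I]⟩ with hf
  have hbij : Function.Bijective f := by
    constructor
    · rintro j k h
      have h1 : 2 * Real.pi * (j.1 : ℝ) / m = 2 * Real.pi * (k.1 : ℝ) / m :=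
        congrArg Subtype.val h
      have h3 : (j.1 : ℝ) = k.1 := by
        have h2π : (Real.pi : ℝ) ≠ 0 := by positivity
        field_simp [h2π] at h1
        exact_mod_cast h1
      have : j.1 = k.1 := by exact_mod_cast h3
      exact Subtype.ext this
    · rintro ⟨l, hl0, hlt, hexp⟩
      rw [← Complex.exp_nat_mul, Complex.exp_eq_one_iff] at hexp
      obtain ⟨k, hk⟩ := hexp
      have hk' : ((m * l : ℝ) : ℂ) * Complex.I = ((2 * Real.pi * k : ℝ) : ℂ) * Complex.I := by
        push_cast
        rw [← mul_assoc] at hk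
        rw [hk]; ring
      have hml : (m : ℝ) * l = 2 * Real.pi * k := by
        have := mul_right_cancel₀ Complex.I_ne_zero hk'
        exact_mod_cast this
      have hk0 : 0 < k := by
        have hpos : (0 : ℝ) < 2 * Real.pi * k := by rw [← hml]; positivity
        by_contra hneg
        push_neg at hneg
        have : (k : ℝ) ≤ 0 := by exact_mod_cast hneg
        nlinarith
      have hkt : (k : ℝ) ≤ (m : ℝ) * t := by
        have hm' : (0:ℝ) < m := by positivity
        have h1 : (m : ℝ) * l ≤ m * (2 * Real.pi * t) := by nlinarith
        rw [hml] at h1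
        nlinarith
      refine ⟨⟨k, hk0, hkt⟩, ?_⟩
      apply Subtype.ext
      show 2 * Real.pi * (k : ℝ) / m = l
      rw [div_eq_iff hm0]
      linarith [hml]
  rw [← Nat.card_eq_of_bijective f hbij]
  have hiff : ∀ j : ℤ, (0 < j ∧ (j : ℝ) ≤ (m : ℝ) * t) ↔ j ∈ Finset.Ioc 0 ⌊(m : ℝ) * t⌋ := by
    intro j
    rw [Finset.mem_Ioc, Int.le_floor]
  rw [Nat.card_congr (Equiv.subtypeEquivRight hiff)]
  rw [Nat.card_eq_finsetCard, Int.card_Ioc, sub_zero, Int.floor_toNat]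

lemma S_finite {t : ℝ} {m : ℕ} (hm : 0 < m) :
    Finite {l : ℝ // 0 < l ∧ l ≤ 2 * Real.pi * t ∧
      Complex.exp ((l : ℂ) * Complex.I) ^ m = 1} := by
  have hm0 : (m : ℝ) ≠ 0 := Nat.cast_ne_zero.mpr hm.ne'
  have hm0c : (m : ℂ) ≠ 0 := Nat.cast_ne_zero.mpr hm.ne'
  have hπ := Real.pi_pos
  have hiff : ∀ j : ℤ, (0 < j ∧ (j : ℝ) ≤ (m : ℝ) * t) ↔ j ∈ Finset.Ioc 0 ⌊(m : ℝ) * t⌋ := by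
    intro j
    rw [Finset.mem_Ioc, Int.le_floor]
  have hfin : Finite {j : ℤ // 0 < j ∧ (j : ℝ) ≤ (m : ℝ) * t} :=
    Finite.of_equiv _ (Equiv.subtypeEquivRight hiff).symm
  apply Finite.of_surjective
    (f := fun j : {j : ℤ // 0 < j ∧ (j : ℝ) ≤ (m : ℝ) * t} =>
      (⟨2 * Real.pi * (j.1 : ℝ) / m, by
        have hj0 : 0 < j.1 := j.2.1
        have hjt : (j.1 : ℝ) ≤ (m : ℝ) * t := j.2.2
        have hj0' : (0 : ℝ) < (j.1 : ℝ) := by exact_mod_cast hj0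
        refine ⟨by positivity, ?_, ?_⟩
        · rw [div_le_iff₀ (by positivity)]
          nlinarith
        · rw [← Complex.exp_nat_mul]
          have heq : (m : ℂ) * (((2 * Real.pi * (j.1 : ℝ) / m : ℝ) : ℂ) * Complex.I)
              = (j.1 : ℂ) * (2 * (Real.pi : ℂ) * Complex.I) := by
            push_cast
            field_simp
          rw [heq, Complex.exp_int_mul_two_pi_mul_I]⟩ :
      {l : ℝ // 0 < l ∧ l ≤ 2 * Real.pi * t ∧ Complex.exp ((l : ℂ) * Complex.I) ^ m = 1}))
  rintro ⟨l, hl0, hlt, hexp⟩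
  rw [← Complex.exp_nat_mul, Complex.exp_eq_one_iff] at hexp
  obtain ⟨k, hk⟩ := hexp
  have hk' : ((m * l : ℝ) : ℂ) * Complex.I = ((2 * Real.pi * k : ℝ) : ℂ) * Complex.I := by
    push_cast
    rw [← mul_assoc] at hk
    rw [hk]; ring
  have hml : (m : ℝ) * l = 2 * Real.pi * k := by
    have := mul_right_cancel₀ Complex.I_ne_zero hk'
    exact_mod_cast this
  have hk0 : 0 < k := by
    have hpos : (0 : ℝ) < 2 * Real.pi * k := by rw [← hml]; positivity
    by_contra hneg
    push_neg at hneg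
    have : (k : ℝ) ≤ 0 := by exact_mod_cast hneg
    nlinarith
  have hkt : (k : ℝ) ≤ (m : ℝ) * t := by
    have hm' : (0:ℝ) < m := by positivity
    have h1 : (m : ℝ) * l ≤ m * (2 * Real.pi * t) := by nlinarith
    rw [hml] at h1
    nlinarith
  refine ⟨⟨k, hk0, hkt⟩, ?_⟩
  apply Subtype.ext
  show 2 * Real.pi * (k : ℝ) / m = l
  rw [div_eq_iff hm0]
  linarith [hml]

lemma nat_card_sigma {ι : Type*} [Fintype ι] (f : ι → Type*) [∀ i, Finite (f i)] :
    Nat.card ((i : ι) × f i) = ∑ i, Nat.card (f i) := by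
  classical
  have h : ∀ i, Fintype (f i) := fun i => Fintype.ofFinite _
  letI := h
  simp only [Nat.card_eq_fintype_card, Fintype.card_sigma]

lemma argCount_X_pow_sub_one {t : ℝ} (ht : 0 ≤ t) {m : ℕ} (hm : 0 < m) :
    argCount t (X ^ m - 1 : Polynomial ℝ) = ⌊(m : ℝ) * t⌋₊ := by
  classical
  have hroots : ((X ^ m - 1 : Polynomial ℝ).map (algebraMap ℝ ℂ)).roots = nthRoots m (1 : ℂ) := by
    have hmap : (X ^ m - 1 : Polynomial ℝ).map (algebraMap ℝ ℂ) = X ^ m - C 1 := by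
      rw [Polynomial.map_sub, Polynomial.map_pow, Polynomial.map_X, Polynomial.map_one,
        Polynomial.C_1]
    rw [hmap]
    rfl
  have hnd := IsPrimitiveRoot.nthRoots_one_nodup (Complex.isPrimitiveRoot_exp m hm.ne')
  have hval : (nthRootsFinset m (1 : ℂ)).val = nthRoots m (1 : ℂ) := by
    rw [nthRootsFinset_def]
    exact Multiset.dedup_eq_self.mpr hnd
  set g : ℂ → ℕ := fun ξ =>
    Nat.card {l : ℝ // 0 < l ∧ l ≤ 2 * Real.pi * t ∧ Complex.exp ((l : ℂ) * Complex.I) = ξ}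
    with hg
  have h1 : argCount t (X ^ m - 1 : Polynomial ℝ) = ∑ ξ ∈ nthRootsFinset m (1 : ℂ), g ξ := by
    rw [argCount, hroots, ← hval]
    rfl
  rw [h1]
  haveI hSfin : Finite {l : ℝ // 0 < l ∧ l ≤ 2 * Real.pi * t ∧
      Complex.exp ((l : ℂ) * Complex.I) ^ m = 1} := S_finite hm
  haveI hfib : ∀ ξ : (nthRootsFinset m (1 : ℂ) : Finset ℂ),
      Finite {l : ℝ // 0 < l ∧ l ≤ 2 * Real.pi * t ∧ Complex.exp ((l : ℂ) * Complex.I) = ξ.1} :=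
    fun ξ => Finite.of_injective
      (fun l => (⟨l.1, l.2.1, l.2.2.1, by
        rw [l.2.2.2]; exact (mem_nthRootsFinset hm 1).1 ξ.2⟩ :
        {l : ℝ // 0 < l ∧ l ≤ 2 * Real.pi * t ∧ Complex.exp ((l : ℂ) * Complex.I) ^ m = 1}))
      (by intro a b h
          have h2 := congrArg Subtype.val h
          exact Subtype.ext h2)
  have e : ((ξ : (nthRootsFinset m (1 : ℂ) : Finset ℂ)) ×
      {l : ℝ // 0 < l ∧ l ≤ 2 * Real.pi * t ∧ Complex.exp ((l : ℂ) * Complex.I) = ξ.1}) ≃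
      {l : ℝ // 0 < l ∧ l ≤ 2 * Real.pi * t ∧ Complex.exp ((l : ℂ) * Complex.I) ^ m = 1} := by
    apply Equiv.ofBijective (f := fun p => ⟨p.2.1, p.2.2.1, p.2.2.2.1, by
        rw [p.2.2.2.2]; exact (mem_nthRootsFinset hm 1).1 p.1.2⟩)
    constructor
    · rintro ⟨⟨ξ, hξ⟩, ⟨l, ha1, ha2, ha3⟩⟩ ⟨⟨ξ', hξ'⟩, ⟨l', hb1, hb2, hb3⟩⟩ hab
      have hl : l = l' := congrArg Subtype.val hab
      subst hl
      have hξξ : ξ = ξ' := ha3.symm.trans hb3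
      subst hξξ
      rfl
    · rintro ⟨l, h1, h2, h3⟩
      exact ⟨⟨⟨Complex.exp ((l : ℂ) * Complex.I), (mem_nthRootsFinset hm 1).2 h3⟩,
        ⟨l, h1, h2, rfl⟩⟩, rfl⟩
  rw [← Finset.sum_coe_sort]
  rw [← nat_card_sigma]
  rw [Nat.card_congr e]
  exact card_S ht hm

lemma argCount_mul {t : ℝ} {f g : Polynomial ℝ} (hf : f ≠ 0) (hg : g ≠ 0) :
    argCount t (f * g) = argCount t f + argCount t g := by
  rw [argCount, argCount, argCount, Polynomial.map_mul,
    Polynomial.roots_mul (mul_ne_zero (Polynomial.map_ne_zero hf) (Polynomial.map_ne_zero hg)),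
    Multiset.map_add, Multiset.sum_add]

lemma argCount_X_pow (t : ℝ) (m : ℕ) : argCount t (X ^ m : Polynomial ℝ) = 0 := by
  rw [argCount, Polynomial.map_pow, Polynomial.map_X, Polynomial.roots_pow, Polynomial.roots_X,
    Multiset.map_nsmul]
  have h0 : Nat.card {l : ℝ // 0 < l ∧ l ≤ 2 * Real.pi * t ∧
      Complex.exp ((l : ℂ) * Complex.I) = 0} = 0 := by
    haveI : IsEmpty {l : ℝ // 0 < l ∧ l ≤ 2 * Real.pi * t ∧
        Complex.exp ((l : ℂ) * Complex.I) = 0} :=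
      ⟨fun p => Complex.exp_ne_zero _ p.2.2.2⟩
    exact Nat.card_of_isEmpty
  simp [h0, Multiset.nsmul_singleton, Multiset.sum_replicate]

lemma argCount_one (t : ℝ) : argCount t (1 : Polynomial ℝ) = 0 := by
  rw [argCount, Polynomial.map_one, Polynomial.roots_one]
  rfl

lemma piFn_one (κ d : ℕ) : piFn κ d 1 = 0 := by
  rw [piFn, argCount_one]
  rw [Polynomial.rootMultiplicity_eq_zero (by simp [Polynomial.IsRoot]),
    Polynomial.rootMultiplicity_eq_zero (by simp [Polynomial.IsRoot]), Polynomial.natDegree_one]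
  norm_num

lemma piFn_mul (κ d : ℕ) {f g : Polynomial ℝ} (hf : f ≠ 0) (hg : g ≠ 0) :
    piFn κ d (f * g) = piFn κ d f + piFn κ d g := by
  rw [piFn, piFn, piFn, Polynomial.rootMultiplicity_mul (x := (0:ℝ)) (mul_ne_zero hf hg),
    Polynomial.rootMultiplicity_mul (x := (1:ℝ)) (mul_ne_zero hf hg),
    Polynomial.natDegree_mul hf hg, argCount_mul hf hg]
  push_cast
  ring

lemma piFn_prod {ι : Type*} (κ d : ℕ) (s : Finset ι) (f : ι → Polynomial ℝ)
    (hf : ∀ i ∈ s, f i ≠ 0) :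
    piFn κ d (∏ i ∈ s, f i) = ∑ i ∈ s, piFn κ d (f i) := by
  classical
  induction s using Finset.cons_induction with
  | empty => simpa using piFn_one κ d
  | cons i s hi ih =>
      rw [Finset.prod_cons, Finset.sum_cons,
        piFn_mul κ d (hf i (Finset.mem_cons_self i s))
          (Finset.prod_ne_zero_iff.mpr fun j hj => hf j (Finset.mem_cons_of_mem hj)),
        ih fun j hj => hf j (Finset.mem_cons_of_mem hj)]

lemma X_pow_sub_one_ne_zero {m : ℕ} (hm : 0 < m) : (X ^ m - 1 : Polynomial ℝ) ≠ 0 := by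
  rw [← Polynomial.C_1]
  exact Polynomial.X_pow_sub_C_ne_zero hm 1

lemma factor_X_pow_sub {m M : ℕ} (h : m ≤ M) :
    (X ^ M - X ^ m : Polynomial ℝ) = X ^ m * (X ^ (M - m) - 1) := by
  rw [mul_sub, mul_one, ← pow_add, Nat.add_sub_cancel' h]

lemma X_pow_sub_X_pow_ne_zero {m M : ℕ} (h : m < M) :
    (X ^ M - X ^ m : Polynomial ℝ) ≠ 0 := by
  rw [factor_X_pow_sub h.le]
  exact mul_ne_zero (pow_ne_zero _ Polynomial.X_ne_zero)
    (X_pow_sub_one_ne_zero (by omega))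

lemma rootMultiplicity_one_X_pow_sub_one {m : ℕ} (hm : 0 < m) :
    Polynomial.rootMultiplicity 1 (X ^ m - 1 : Polynomial ℝ) = 1 := by
  have hgeom : (∑ i ∈ Finset.range m, (X : Polynomial ℝ) ^ i) * (X - 1) = X ^ m - 1 :=
    geom_sum_mul X m
  rw [← hgeom, Polynomial.rootMultiplicity_mul (by rw [hgeom]; exact X_pow_sub_one_ne_zero hm)]
  have h1 : Polynomial.rootMultiplicity 1 (∑ i ∈ Finset.range m, (X : Polynomial ℝ) ^ i) = 0 := by
    apply Polynomial.rootMultiplicity_eq_zero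
    simp only [Polynomial.IsRoot, Polynomial.eval_finset_sum, Polynomial.eval_pow,
      Polynomial.eval_X, one_pow, Finset.sum_const, Finset.card_range]
    simpa using hm.ne'
  have h2 : Polynomial.rootMultiplicity (1:ℝ) (X - 1) = 1 := by
    rw [show (X - 1 : Polynomial ℝ) = X - Polynomial.C 1 by rw [Polynomial.C_1]]
    exact Polynomial.rootMultiplicity_X_sub_C_self
  rw [h1, h2]

lemma piFn_X_pow_sub_one (κ d : ℕ) {m : ℕ} (hm : 0 < m) (hd : 0 < d) :
    piFn κ d (X ^ m - 1 : Polynomial ℝ) =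
      ((m * κ : ℕ) : ℚ) / (d : ℚ) + ((m * κ / d : ℕ) : ℚ) + 1 / 2 := by
  have h0 : Polynomial.rootMultiplicity 0 (X ^ m - 1 : Polynomial ℝ) = 0 := by
    apply Polynomial.rootMultiplicity_eq_zero
    simp [Polynomial.IsRoot, zero_pow hm.ne']
  have hdeg : (X ^ m - 1 : Polynomial ℝ).natDegree = m := by
    rw [← Polynomial.C_1]
    exact Polynomial.natDegree_X_pow_sub_C
  have harg : argCount ((κ : ℝ) / (d : ℝ)) (X ^ m - 1 : Polynomial ℝ) = m * κ / d := by
    rw [argCount_X_pow_sub_one (by positivity) hm]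
    have : (m : ℝ) * ((κ : ℝ) / (d : ℝ)) = ((m * κ : ℕ) : ℝ) / ((d : ℕ) : ℝ) := by
      push_cast; ring
    rw [this, Nat.floor_div_natCast, Nat.floor_natCast]
  rw [piFn, h0, hdeg, harg, rootMultiplicity_one_X_pow_sub_one hm]
  push_cast
  ring

lemma piFn_X_pow (κ d m : ℕ) :
    piFn κ d (X ^ m : Polynomial ℝ) = ((2 * m * κ : ℕ) : ℚ) / (d : ℚ) := by
  have h0 : Polynomial.rootMultiplicity 0 (X ^ m : Polynomial ℝ) = m := by
    have : (X ^ m : Polynomial ℝ) = (X - Polynomial.C 0) ^ m := by rw [Polynomial.C_0, sub_zero]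
    rw [this]
    exact Polynomial.rootMultiplicity_X_sub_C_pow 0 m
  have h1 : Polynomial.rootMultiplicity 1 (X ^ m : Polynomial ℝ) = 0 := by
    apply Polynomial.rootMultiplicity_eq_zero
    simp [Polynomial.IsRoot]
  rw [piFn, h0, h1, Polynomial.natDegree_X_pow, argCount_X_pow]
  push_cast
  ring

lemma nat_div_shift {r d κ : ℕ} (hd : 0 < d) : (r + d) * κ / d = r * κ / d + κ := by
  rw [add_mul, Nat.add_mul_div_left _ _ hd]

lemma piFn_X_pow_sub_one_shift (κ d : ℕ) {m : ℕ} (hm : 0 < m) (hd : 0 < d) :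
    piFn κ d (X ^ (m + d) - 1 : Polynomial ℝ) =
      piFn κ d (X ^ m - 1 : Polynomial ℝ) + 2 * (κ : ℚ) := by
  rw [piFn_X_pow_sub_one κ d (by omega) hd, piFn_X_pow_sub_one κ d hm hd, nat_div_shift hd]
  have hd0 : (d : ℚ) ≠ 0 := Nat.cast_ne_zero.mpr hd.ne'
  push_cast
  field_simp
  ring

lemma piFn_diff (κ d : ℕ) (hd : 0 < d) {m M : ℕ} (h : m < M) :
    piFn κ d (X ^ (M + d) - X ^ m : Polynomial ℝ) =
      piFn κ d (X ^ M - X ^ m : Polynomial ℝ) + 2 * (κ : ℚ) := by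
  have he : M + d - m = (M - m) + d := by omega
  rw [factor_X_pow_sub (by omega : m ≤ M + d), factor_X_pow_sub h.le, he,
    piFn_mul κ d (pow_ne_zero _ Polynomial.X_ne_zero) (X_pow_sub_one_ne_zero (by omega)),
    piFn_mul κ d (pow_ne_zero _ Polynomial.X_ne_zero) (X_pow_sub_one_ne_zero (by omega)),
    piFn_X_pow_sub_one_shift κ d (by omega : 0 < M - m) hd]
  ring

lemma sum_shift (d : ℕ) (g : ℕ → ℚ) (c : ℚ) (hg : ∀ i, 1 ≤ i → g (i + d) = g i + c) :
    ∀ m : ℕ, ∑ j ∈ Finset.range d, g (m + 1 + j) =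
      (∑ j ∈ Finset.range d, g (1 + j)) + (m : ℚ) * c := by
  intro m
  induction m with
  | zero => simp
  | succ m IH =>
      have e1 := Finset.sum_range_succ (fun j => g (m + 1 + j)) d
      have e2 := Finset.sum_range_succ' (fun j => g (m + 1 + j)) d
      have e3 : ∑ j ∈ Finset.range d, g (m + 1 + (j + 1)) =
          ∑ j ∈ Finset.range d, g (m + 1 + 1 + j) := by
        apply Finset.sum_congr rfl
        intro j _
        congr 1
        omega
      have e4 : g (m + 1 + d) = g (m + 1) + c := hg (m + 1) (by omega)
      rw [e3] at e2
      have : ∑ j ∈ Finset.range d, g (m + 1 + 1 + j) =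
          ∑ j ∈ Finset.range d, g (m + 1 + j) + c := by
        rw [e4] at e1
        linarith [e1.symm.trans e2]
      rw [this, IH]
      push_cast
      ring

lemma sum_Ioc_eq (g : ℕ → ℚ) (m d : ℕ) :
    ∑ i ∈ Finset.Ioc m (m + d), g i = ∑ j ∈ Finset.range d, g (m + 1 + j) := by
  rw [← Finset.Ico_add_one_add_one_eq_Ioc, Finset.sum_Ico_eq_sum_range]
  have : m + d + 1 - (m + 1) = d := by omega
  rw [this]

/-- Section 9 (linear groups): for a β-set `x 1 > x 2 > … > x a ≥ 0` of a partition of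
`n = Σ x_i − a(a−1)/2`,
`π_{κ/d}(∏_{i=n+1}^{n+d}(q^i−1)·∏_{i=2}^{a}(q^{x_1+d}−q^{x_i}))
 − π_{κ/d}(∏_{i=x_1+1}^{x_1+d}(q^i−1)·∏_{i=2}^{a}(q^{x_1}−q^{x_i})) = 2κ(n − x_1 + a − 1)`. -/
theorem piFn_GL_min (κ d : ℕ) (hd : 2 ≤ d) (hκ : 1 ≤ κ) (hcop : Nat.Coprime κ d)
    (a : ℕ) (ha : 1 ≤ a) (x : ℕ → ℕ)
    (hx : ∀ i, 1 ≤ i → i < a → x (i + 1) < x i)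
    (n : ℕ)
    (hn : 2 * (n : ℤ) = 2 * (∑ i ∈ Finset.Icc 1 a, (x i : ℤ)) - (a : ℤ) * ((a : ℤ) - 1)) :
    piFn κ d ((∏ i ∈ Finset.Ioc n (n + d), (X ^ i - 1)) *
          ∏ i ∈ Finset.Icc 2 a, (X ^ (x 1 + d) - X ^ x i)) -
        piFn κ d ((∏ i ∈ Finset.Ioc (x 1) (x 1 + d), (X ^ i - 1)) *
          ∏ i ∈ Finset.Icc 2 a, (X ^ (x 1) - X ^ x i)) =
      2 * (κ : ℚ) * ((n : ℚ) - (x 1 : ℚ) + (a : ℚ) - 1) := by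
  have hd0 : 0 < d := by omega
  have hchain : ∀ j : ℕ, 1 + j ≤ a → x (1 + j) + j ≤ x 1 := by
    intro j
    induction j with
    | zero => intro _; simp
    | succ k ih =>
        intro h
        have h2 := hx (1 + k) (by omega) (by omega)
        have h3 := ih (by omega)
        have h4 : 1 + (k + 1) = 1 + k + 1 := by omega
        rw [h4]
        omega
  have hx1 : ∀ i ∈ Finset.Icc 2 a, x i < x 1 := by
    intro i hi
    rw [Finset.mem_Icc] at hi
    have h := hchain (i - 1) (by omega)
    rw [show 1 + (i - 1) = i by omega] at h
    omega
  have hprod1 : ∀ m : ℕ, (∏ i ∈ Finset.Ioc m (m + d), (X ^ i - 1 : Polynomial ℝ)) ≠ 0 := by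
    intro m
    apply Finset.prod_ne_zero_iff.mpr
    intro i hi
    rw [Finset.mem_Ioc] at hi
    exact X_pow_sub_one_ne_zero (by omega)
  have hprod2 : (∏ i ∈ Finset.Icc 2 a, (X ^ (x 1 + d) - X ^ x i : Polynomial ℝ)) ≠ 0 := by
    apply Finset.prod_ne_zero_iff.mpr
    intro i hi
    exact X_pow_sub_X_pow_ne_zero (by have := hx1 i hi; omega)
  have hprod3 : (∏ i ∈ Finset.Icc 2 a, (X ^ (x 1) - X ^ x i : Polynomial ℝ)) ≠ 0 := by
    apply Finset.prod_ne_zero_iff.mpr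
    intro i hi
    exact X_pow_sub_X_pow_ne_zero (hx1 i hi)
  rw [piFn_mul κ d (hprod1 n) hprod2, piFn_mul κ d (hprod1 (x 1)) hprod3,
    piFn_prod κ d _ _ (fun i hi => X_pow_sub_one_ne_zero
      (by rw [Finset.mem_Ioc] at hi; omega)),
    piFn_prod κ d _ _ (fun i hi => X_pow_sub_one_ne_zero
      (by rw [Finset.mem_Ioc] at hi; omega)),
    piFn_prod κ d _ _ (fun i hi => X_pow_sub_X_pow_ne_zero (by have := hx1 i hi; omega)),
    piFn_prod κ d _ _ (fun i hi => X_pow_sub_X_pow_ne_zero (hx1 i hi))]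
  have hIoc : ∀ m : ℕ, ∑ i ∈ Finset.Ioc m (m + d), piFn κ d (X ^ i - 1 : Polynomial ℝ) =
      (∑ j ∈ Finset.range d, piFn κ d (X ^ (1 + j) - 1 : Polynomial ℝ)) + (m : ℚ) * (2 * κ) := by
    intro m
    rw [sum_Ioc_eq (fun i => piFn κ d (X ^ i - 1 : Polynomial ℝ))]
    exact sum_shift d (fun i => piFn κ d (X ^ i - 1 : Polynomial ℝ)) (2 * (κ : ℚ))
      (fun i hi => piFn_X_pow_sub_one_shift κ d (m := i) (by omega) hd0) m
  have hQ : ∑ i ∈ Finset.Icc 2 a, piFn κ d (X ^ (x 1 + d) - X ^ x i : Polynomial ℝ) =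
      (∑ i ∈ Finset.Icc 2 a, piFn κ d (X ^ (x 1) - X ^ x i : Polynomial ℝ)) +
        ((a : ℚ) - 1) * (2 * κ) := by
    have hterm : ∀ i ∈ Finset.Icc 2 a,
        piFn κ d (X ^ (x 1 + d) - X ^ x i : Polynomial ℝ) =
          piFn κ d (X ^ (x 1) - X ^ x i : Polynomial ℝ) + 2 * (κ : ℚ) := fun i hi =>
      piFn_diff κ d hd0 (hx1 i hi)
    rw [Finset.sum_congr rfl hterm, Finset.sum_add_distrib, Finset.sum_const, Nat.card_Icc]
    have hcard : ((a + 1 - 2 : ℕ) : ℚ) = (a : ℚ) - 1 := by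
      have he : a + 1 - 2 = a - 1 := by omega
      rw [he, Nat.cast_sub ha, Nat.cast_one]
    rw [nsmul_eq_mul, hcard]
  rw [hIoc n, hIoc (x 1), hQ]
  ring
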